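/- Let s ≥ 0, let L be an axes-aligned rectangle, let v be a valuation given by an integrable density, and let k ≥ 1 be an integer. Then Ξ-MMS^{k,s} ≥ MMS^{4k²,s}, where Ξ-MMS^{k,s} is the supremum, over all s-separated guillotine partitions of L into k rectangles P₁,…,P_k, of min_j v(P_j), and MMS^{4k²,s} is the supremum, over all families P₁,…,P_{4k²} of axes-aligned rectangles contained in L that have pairwise intersections of zero Lebesgue measure and are pairwise s-separated, of min_j v(P_j). -/

import Mathlib

open MeasureTheory

noncomputable section

/-- A point of the plane. -/
abbrev Pt := ℝ × ℝ

/-- The ℓ∞ distance between two points of the plane. -/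
def linfDist (p q : Pt) : ℝ := max |p.1 - q.1| |p.2 - q.2|

/-- Two pieces of land are `s`-separated: every pair of points, one from each piece,
is at ℓ∞ distance at least `s`. -/
def SepSets (s : ℝ) (A B : Set Pt) : Prop := ∀ p ∈ A, ∀ q ∈ B, s ≤ linfDist p q

/-- An axes-aligned rectangle `[a,b] × [c,d]` with `a < b` and `c < d`. -/
structure Rect where
  a : ℝ
  b : ℝ
  c : ℝ
  d : ℝ
  hab : a < b
  hcd : c < d

/-- The set of points of a rectangle. -/
def Rect.set (R : Rect) : Set Pt := Set.Icc R.a R.b ×ˢ Set.Icc R.c R.d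

/-- The length of the shorter side of a rectangle. -/
def Rect.short (R : Rect) : ℝ := min (R.b - R.a) (R.d - R.c)

/-- The length of the longer side of a rectangle. -/
def Rect.long (R : Rect) : ℝ := max (R.b - R.a) (R.d - R.c)

/-- A rectangle is `r`-fat if its longer side is at most `r` times its shorter side. -/
def Rect.Fat (r : ℝ) (R : Rect) : Prop := R.long ≤ r * R.short

/-- The value of a piece `Z` under the density `f`. -/
def val (f : Pt → ℝ) (Z : Set Pt) : ℝ := ∫ p in Z, f p

/-- The 1-out-of-`k` maximin share of an agent with density `f` on land `L`
with separation parameter `s`: the supremum over families of `k` axes-aligned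
rectangles inside `L`, pairwise intersecting in zero measure and pairwise
`s`-separated, of the minimum value of a rectangle. -/
def MMS (f : Pt → ℝ) (L : Set Pt) (s : ℝ) (k : ℕ) : ℝ :=
  sSup {t : ℝ | ∃ P : Fin k → Rect,
    (∀ j, (P j).set ⊆ L) ∧
    (∀ i j, i ≠ j → volume ((P i).set ∩ (P j).set) = 0) ∧
    (∀ i j, i ≠ j → SepSets s ((P i).set) ((P j).set)) ∧
    (∀ j, t ≤ val f ((P j).set))}

/-- A valuation given by density `f` is `s`-normalized: there are finitely many
pairwise `s`-separated axes-aligned rectangles, each of value at most 1,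
such that `f` vanishes outside their union. -/
def SNormalized (s : ℝ) (f : Pt → ℝ) : Prop :=
  ∃ (N : ℕ) (Q : Fin N → Rect),
    (∀ i j, i ≠ j → SepSets s ((Q i).set) ((Q j).set)) ∧
    (∀ i, val f ((Q i).set) ≤ 1) ∧
    (∀ p, p ∉ ⋃ i, (Q i).set → f p = 0)

/-- The unit square `[0,1] × [0,1]`. -/
def unitSquare : Set Pt := Set.Icc (0 : ℝ) 1 ×ˢ Set.Icc (0 : ℝ) 1

/-- `Guillotine s a0 a1 b0 b1 P`: the family `P` of rectangles forms an
`s`-separated guillotine partition of `[a0,a1] × [b0,b1]`. -/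
inductive Guillotine (s : ℝ) : ℝ → ℝ → ℝ → ℝ → List Rect → Prop
  | single (a0 a1 b0 b1 : ℝ) (P : Rect)
      (h : P.set ⊆ Set.Icc a0 a1 ×ˢ Set.Icc b0 b1) :
      Guillotine s a0 a1 b0 b1 [P]
  | vert (a0 a1 b0 b1 a : ℝ) (h1 : a0 < a) (h2 : a < a1 - s)
      (P1 P2 : List Rect)
      (g1 : Guillotine s a0 a b0 b1 P1)
      (g2 : Guillotine s (a + s) a1 b0 b1 P2) :
      Guillotine s a0 a1 b0 b1 (P1 ++ P2)
  | horiz (a0 a1 b0 b1 b : ℝ) (h1 : b0 < b) (h2 : b < b1 - s)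
      (P1 P2 : List Rect)
      (g1 : Guillotine s a0 a1 b0 b P1)
      (g2 : Guillotine s a0 a1 (b + s) b1 P2) :
      Guillotine s a0 a1 b0 b1 (P1 ++ P2)


/-- The guillotine maximin share: supremum over `s`-separated guillotine
partitions of `[a0,a1] × [b0,b1]` into `k` rectangles of the minimum value. -/
def XiMMS (f : Pt → ℝ) (a0 a1 b0 b1 s : ℝ) (k : ℕ) : ℝ :=
  sSup {t : ℝ | ∃ P : List Rect, P.length = k ∧ Guillotine s a0 a1 b0 b1 P ∧
    ∀ Q ∈ P, t ≤ val f Q.set}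

section AuxLemmas

/-- Lengths of `Chain'` lists for a transitive irreflexive relation are bounded by the
cardinality. -/
lemma chain'_length_le {n : ℕ} {r : Fin n → Fin n → Prop}
    (ht : Transitive r) (hi : ∀ i, ¬ r i i)
    {l : List (Fin n)} (hl : l.Chain' r) : l.length ≤ n := by
  haveI : IsTrans (Fin n) r := ⟨fun a b c hab hbc => ht hab hbc⟩
  have hp : l.Pairwise r := List.isChain_iff_pairwise.mp hl
  have hnd : l.Nodup := hp.imp (fun {a b} hab => by rintro rfl; exact hi a hab)
  simpa using hnd.length_le_card

/-- Existence of a "longest chain ending at `i`" function. -/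
lemma exists_maxchain {n : ℕ} (hn : 1 ≤ n) (r : Fin n → Fin n → Prop)
    (ht : Transitive r) (hi : ∀ i, ¬ r i i) :
    ∃ A : Fin n → ℕ,
      (∀ i, 1 ≤ A i) ∧ (∀ i, A i ≤ n) ∧
      (∀ i, ∃ l : List (Fin n), l.Chain' r ∧ l.getLast? = some i ∧ l.length = A i) ∧
      (∀ i j, r i j → A i < A j) := by
  classical
  set Q : Fin n → ℕ → Prop :=
    fun i m => ∃ l : List (Fin n), l.Chain' r ∧ l.getLast? = some i ∧ l.length = m with hQ
  refine ⟨fun i => Nat.findGreatest (Q i) n, ?_, ?_, ?_, ?_⟩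
  · intro i
    exact Nat.le_findGreatest hn ⟨[i], List.isChain_singleton i, rfl, rfl⟩
  · intro i; exact Nat.findGreatest_le n
  · intro i
    exact Nat.findGreatest_spec (P := Q i) hn ⟨[i], List.isChain_singleton i, rfl, rfl⟩
  · intro i j hij
    show Nat.findGreatest (Q i) n < Nat.findGreatest (Q j) n
    obtain ⟨l, hc, hlast, hlen⟩ :=
      Nat.findGreatest_spec (P := Q i) hn ⟨[i], List.isChain_singleton i, rfl, rfl⟩
    have hc' : (l ++ [j]).Chain' r := by
      refine List.isChain_append.mpr ?_
      exact ⟨hc, List.isChain_singleton j, by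
        intro x hx y hy
        rw [hlast] at hx
        simp only [Option.mem_def, Option.some.injEq] at hx
        simp only [List.head?_cons, Option.mem_def, Option.some.injEq] at hy
        subst hx; subst hy; exact hij⟩
    have hlast' : (l ++ [j]).getLast? = some j := by
      rw [List.getLast?_append_of_ne_nil _ (by simp)]; rfl
    have hlen' : (l ++ [j]).length = Nat.findGreatest (Q i) n + 1 := by
      simp [hlen]
    have hle : (l ++ [j]).length ≤ n := chain'_length_le ht hi hc'
    have := Nat.le_findGreatest (P := Q j) (n := n) (m := Nat.findGreatest (Q i) n + 1)
      (by omega) ⟨l ++ [j], hc', hlast', hlen'⟩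
    omega

/-- Erdős–Szekeres type lemma: among `n > (k-1)²` elements where each pair is comparable
in one of two transitive irreflexive relations, there is a chain of length `k` in one of
them. -/
lemma exists_chain {n k : ℕ} (hk : 1 ≤ k) (hn : (k - 1) * (k - 1) < n)
    (rx ry : Fin n → Fin n → Prop)
    (hxt : Transitive rx) (hyt : Transitive ry)
    (hxi : ∀ i, ¬ rx i i) (hyi : ∀ i, ¬ ry i i)
    (hdich : ∀ i j, i ≠ j → rx i j ∨ rx j i ∨ ry i j ∨ ry j i) :
    ∃ l : List (Fin n), l.length = k ∧ (l.Chain' rx ∨ l.Chain' ry) := by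
  classical
  have hn1 : 1 ≤ n := by omega
  obtain ⟨A, hA1, hAn, hAw, hAlt⟩ := exists_maxchain hn1 rx hxt hxi
  obtain ⟨B, hB1, hBn, hBw, hBlt⟩ := exists_maxchain hn1 ry hyt hyi
  by_cases hx : ∃ i, k ≤ A i
  · obtain ⟨i, hi⟩ := hx
    obtain ⟨l, hc, _, hlen⟩ := hAw i
    exact ⟨l.take k, by simp [hlen]; omega, Or.inl (hc.take k)⟩
  by_cases hy : ∃ i, k ≤ B i
  · obtain ⟨i, hi⟩ := hy
    obtain ⟨l, hc, _, hlen⟩ := hBw i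
    exact ⟨l.take k, by simp [hlen]; omega, Or.inr (hc.take k)⟩
  push_neg at hx hy
  exfalso
  have hmaps : ∀ i : Fin n, i ∈ Finset.univ →
      (A i, B i) ∈ Finset.Icc 1 (k - 1) ×ˢ Finset.Icc 1 (k - 1) := by
    intro i _
    have h1 := hA1 i; have h2 := hx i; have h3 := hB1 i; have h4 := hy i
    simp only [Finset.mem_product, Finset.mem_Icc]
    omega
  have hinj : Set.InjOn (fun i => (A i, B i)) (Finset.univ : Finset (Fin n)) := by
    intro i _ j _ hEq
    by_contra hne
    simp only [Prod.mk.injEq] at hEq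
    rcases hdich i j hne with h | h | h | h
    · exact absurd hEq.1 (hAlt i j h).ne
    · exact absurd hEq.1.symm (hAlt j i h).ne
    · exact absurd hEq.2 (hBlt i j h).ne
    · exact absurd hEq.2.symm (hBlt j i h).ne
  have hcard := Finset.card_le_card_of_injOn _ hmaps hinj
  simp only [Finset.card_univ, Fintype.card_fin, Finset.card_product, Nat.card_Icc,
    Nat.add_sub_cancel] at hcard
  omega

/-- Bounds of a rectangle contained in a box. -/
lemma rect_sub_box {R : Rect} {a0 a1 b0 b1 : ℝ}
    (h : R.set ⊆ Set.Icc a0 a1 ×ˢ Set.Icc b0 b1) :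
    a0 ≤ R.a ∧ R.b ≤ a1 ∧ b0 ≤ R.c ∧ R.d ≤ b1 := by
  have h1 : ((R.a, R.c) : Pt) ∈ R.set := ⟨⟨le_refl _, R.hab.le⟩, ⟨le_refl _, R.hcd.le⟩⟩
  have h2 : ((R.b, R.d) : Pt) ∈ R.set := ⟨⟨R.hab.le, le_refl _⟩, ⟨R.hcd.le, le_refl _⟩⟩
  have g1 := h h1; have g2 := h h2
  exact ⟨g1.1.1, g2.1.2, g1.2.1, g2.2.2⟩

/-- An `x`-chain of rectangles inside a box yields a guillotine partition. -/
lemma guillotine_of_xchain {s : ℝ} (hs : 0 ≤ s) :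
    ∀ (l : List Rect) (a0 a1 b0 b1 : ℝ), l ≠ [] →
      l.Chain' (fun R S => R.b + s ≤ S.a) →
      (∀ R ∈ l, R.set ⊆ Set.Icc a0 a1 ×ˢ Set.Icc b0 b1) →
      Guillotine s a0 a1 b0 b1 l
  | [], _, _, _, _, hne, _, _ => absurd rfl hne
  | [R], a0, a1, b0, b1, _, _, hsub =>
      Guillotine.single a0 a1 b0 b1 R (hsub R (by simp))
  | R :: S :: rest, a0, a1, b0, b1, _, hc, hsub => by
    have hboxR := rect_sub_box (hsub R (by simp))
    have hboxS := rect_sub_box (hsub S (by simp))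
    obtain ⟨hRS, hc'⟩ := List.isChain_cons_cons.mp hc
    have h1 : a0 < R.b := lt_of_le_of_lt hboxR.1 R.hab
    have h2 : R.b < a1 - s := by
      have := S.hab; have := hboxS.2.1; linarith
    have htail : ∀ T ∈ S :: rest, R.b + s ≤ T.a := by
      haveI : IsTrans Rect (fun R S => R.b + s ≤ S.a) :=
        ⟨fun X Y Z hXY hYZ => by have := Y.hab; linarith⟩
      have hp := List.isChain_iff_pairwise.mp hc
      exact (List.pairwise_cons.mp hp).1
    have g1 : Guillotine s a0 R.b b0 b1 [R] := by
      refine Guillotine.single _ _ _ _ R ?_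
      intro p hp
      exact ⟨⟨(hsub R (by simp) hp).1.1, hp.1.2⟩, (hsub R (by simp) hp).2⟩
    have g2 : Guillotine s (R.b + s) a1 b0 b1 (S :: rest) := by
      refine guillotine_of_xchain hs (S :: rest) _ _ _ _ (by simp) hc' ?_
      intro T hT p hp
      exact ⟨⟨le_trans (htail T hT) hp.1.1, (hsub T (List.mem_cons_of_mem R hT) hp).1.2⟩,
        (hsub T (List.mem_cons_of_mem R hT) hp).2⟩
    exact Guillotine.vert a0 a1 b0 b1 R.b h1 h2 [R] (S :: rest) g1 g2

/-- A `y`-chain of rectangles inside a box yields a guillotine partition. -/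
lemma guillotine_of_ychain {s : ℝ} (hs : 0 ≤ s) :
    ∀ (l : List Rect) (a0 a1 b0 b1 : ℝ), l ≠ [] →
      l.Chain' (fun R S => R.d + s ≤ S.c) →
      (∀ R ∈ l, R.set ⊆ Set.Icc a0 a1 ×ˢ Set.Icc b0 b1) →
      Guillotine s a0 a1 b0 b1 l
  | [], _, _, _, _, hne, _, _ => absurd rfl hne
  | [R], a0, a1, b0, b1, _, _, hsub =>
      Guillotine.single a0 a1 b0 b1 R (hsub R (by simp))
  | R :: S :: rest, a0, a1, b0, b1, _, hc, hsub => by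
    have hboxR := rect_sub_box (hsub R (by simp))
    have hboxS := rect_sub_box (hsub S (by simp))
    obtain ⟨hRS, hc'⟩ := List.isChain_cons_cons.mp hc
    have h1 : b0 < R.d := lt_of_le_of_lt hboxR.2.2.1 R.hcd
    have h2 : R.d < b1 - s := by
      have := S.hcd; have := hboxS.2.2.2; linarith
    have htail : ∀ T ∈ S :: rest, R.d + s ≤ T.c := by
      haveI : IsTrans Rect (fun R S => R.d + s ≤ S.c) :=
        ⟨fun X Y Z hXY hYZ => by have := Y.hcd; linarith⟩
      have hp := List.isChain_iff_pairwise.mp hc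
      exact (List.pairwise_cons.mp hp).1
    have g1 : Guillotine s a0 a1 b0 R.d [R] := by
      refine Guillotine.single _ _ _ _ R ?_
      intro p hp
      exact ⟨(hsub R (by simp) hp).1, ⟨(hsub R (by simp) hp).2.1, hp.2.2⟩⟩
    have g2 : Guillotine s a0 a1 (R.d + s) b1 (S :: rest) := by
      refine guillotine_of_ychain hs (S :: rest) _ _ _ _ (by simp) hc' ?_
      intro T hT p hp
      exact ⟨(hsub T (List.mem_cons_of_mem R hT) hp).1,
        ⟨le_trans (htail T hT) hp.2.1, (hsub T (List.mem_cons_of_mem R hT) hp).2.2⟩⟩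
    exact Guillotine.horiz a0 a1 b0 b1 R.d h1 h2 [R] (S :: rest) g1 g2

/-- In two intervals whose gap is less than `s > 0`, there are points at distance `< s`. -/
lemma close_points {s : ℝ} (hs : 0 < s) {a b a' b' : ℝ} (hab : a < b) (hab' : a' < b')
    (h1 : a' < b + s) (h2 : a < b' + s) :
    ∃ x ∈ Set.Icc a b, ∃ y ∈ Set.Icc a' b', |x - y| < s := by
  rcases le_total a a' with h | h
  · refine ⟨min b a', ⟨le_min hab.le h, min_le_left _ _⟩, a', ⟨le_refl _, hab'.le⟩, ?_⟩
    have hm1 : min b a' ≤ a' := min_le_right _ _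
    have hm2 : a' - s < min b a' := lt_min (by linarith) (by linarith)
    rw [abs_sub_lt_iff]; constructor <;> linarith
  · refine ⟨a, ⟨le_refl _, hab.le⟩, min b' a, ⟨le_min hab'.le h, min_le_left _ _⟩, ?_⟩
    have hm1 : min b' a ≤ a := min_le_right _ _
    have hm2 : a - s < min b' a := lt_min (by linarith) (by linarith)
    rw [abs_sub_lt_iff]; constructor <;> linarith

/-- Two rectangles with null intersection that are `s`-separated are separated in one of
the four axis directions. -/
lemma rect_dichotomy {s : ℝ} (hs : 0 ≤ s) (R S : Rect)
    (hvol : volume (R.set ∩ S.set) = 0)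
    (hsep : SepSets s R.set S.set) :
    R.b + s ≤ S.a ∨ S.b + s ≤ R.a ∨ R.d + s ≤ S.c ∨ S.d + s ≤ R.c := by
  by_contra hcon
  push_neg at hcon
  obtain ⟨h1, h2, h3, h4⟩ := hcon
  rcases eq_or_lt_of_le hs with hs0 | hs0
  · -- s = 0 : positive overlap contradicts the null intersection
    have hx : max R.a S.a < min R.b S.b :=
      max_lt (lt_min R.hab (by linarith)) (lt_min (by linarith) S.hab)
    have hy : max R.c S.c < min R.d S.d :=
      max_lt (lt_min R.hcd (by linarith)) (lt_min (by linarith) S.hcd)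
    have hset : R.set ∩ S.set =
        Set.Icc (max R.a S.a) (min R.b S.b) ×ˢ Set.Icc (max R.c S.c) (min R.d S.d) := by
      simp [Rect.set, Set.prod_inter_prod, Set.Icc_inter_Icc]
    rw [hset, Measure.volume_eq_prod, Measure.prod_prod, Real.volume_Icc, Real.volume_Icc]
      at hvol
    have p1 : (0 : ENNReal) < ENNReal.ofReal (min R.b S.b - max R.a S.a) :=
      ENNReal.ofReal_pos.mpr (by linarith)
    have p2 : (0 : ENNReal) < ENNReal.ofReal (min R.d S.d - max R.c S.c) :=
      ENNReal.ofReal_pos.mpr (by linarith)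
    exact absurd hvol (mul_ne_zero p1.ne' p2.ne')
  · -- s > 0 : find close points, contradicting separation
    obtain ⟨x, hx, x', hx', hxc⟩ := close_points hs0 R.hab S.hab h1 h2
    obtain ⟨y, hy, y', hy', hyc⟩ := close_points hs0 R.hcd S.hcd h3 h4
    have hmem1 : ((x, y) : Pt) ∈ R.set := ⟨hx, hy⟩
    have hmem2 : ((x', y') : Pt) ∈ S.set := ⟨hx', hy'⟩
    have := hsep _ hmem1 _ hmem2
    have hlt : linfDist (x, y) (x', y') < s := max_lt hxc hyc
    linarith

end AuxLemmas


/-- The guillotine maximin share with `k` pieces is at least the general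
maximin share with `4k²` pieces. -/

theorem stmt14 (s : ℝ) (hs : 0 ≤ s) (a0 a1 b0 b1 : ℝ)
    (ha : a0 < a1) (hb : b0 < b1)
    (f : Pt → ℝ) (hint : Integrable f) (hpos : ∀ p, 0 ≤ f p)
    (k : ℕ) (hk : 1 ≤ k) :
    MMS f (Set.Icc a0 a1 ×ˢ Set.Icc b0 b1) s (4 * k ^ 2) ≤
      XiMMS f a0 a1 b0 b1 s k := by
  classical
  set T : Set ℝ := {t : ℝ | ∃ P : List Rect, P.length = k ∧ Guillotine s a0 a1 b0 b1 P ∧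
    ∀ Q ∈ P, t ≤ val f Q.set} with hT
  have hbddT : BddAbove T := by
    refine ⟨∫ p, f p, ?_⟩
    rintro t ⟨P, hlen, _, hval⟩
    have hPne : P ≠ [] := by intro h; rw [h] at hlen; simp at hlen; omega
    obtain ⟨Q, hQ⟩ := List.exists_mem_of_ne_nil P hPne
    calc t ≤ val f Q.set := hval Q hQ
      _ ≤ ∫ p, f p :=
        setIntegral_le_integral hint (Filter.Eventually.of_forall hpos)
  have hXi : XiMMS f a0 a1 b0 b1 s k = sSup T := rfl
  rw [MMS, hXi]
  apply Real.sSup_le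
  · rintro t ⟨P, hsubL, hvol, hsep, hval⟩
    have hnlt : (k - 1) * (k - 1) < 4 * k ^ 2 := by
      have e1 : (k - 1) * (k - 1) ≤ k * k := Nat.mul_le_mul (by omega) (by omega)
      have e2 : k * k = k ^ 2 := (sq k).symm
      have e3 : 1 ≤ k ^ 2 := Nat.one_le_pow 2 k (by omega)
      linarith
    obtain ⟨l, hlen, hchain⟩ := exists_chain (n := 4 * k ^ 2) hk hnlt
      (fun i j => (P i).b + s ≤ (P j).a) (fun i j => (P i).d + s ≤ (P j).c)
      (fun i j m hij hjm => by have := (P j).hab; linarith)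
      (fun i j m hij hjm => by have := (P j).hcd; linarith)
      (fun i => by have := (P i).hab; intro h; linarith)
      (fun i => by have := (P i).hcd; intro h; linarith)
      (fun i j hij => rect_dichotomy hs (P i) (P j) (hvol i j hij) (hsep i j hij))
    have hlne : l ≠ [] := by intro h; rw [h] at hlen; simp at hlen; omega
    have hmne : l.map P ≠ [] := by simpa using hlne
    have hsub' : ∀ R ∈ l.map P, R.set ⊆ Set.Icc a0 a1 ×ˢ Set.Icc b0 b1 := by
      intro R hR
      obtain ⟨j, _, rfl⟩ := List.mem_map.mp hR
      exact hsubL j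
    have hguil : Guillotine s a0 a1 b0 b1 (l.map P) := by
      rcases hchain with h | h
      · exact guillotine_of_xchain hs (l.map P) a0 a1 b0 b1 hmne
          ((List.isChain_map P).mpr h) hsub'
      · exact guillotine_of_ychain hs (l.map P) a0 a1 b0 b1 hmne
          ((List.isChain_map P).mpr h) hsub'
    refine le_csSup hbddT ⟨l.map P, by simp [hlen], hguil, ?_⟩
    rintro Q hQ
    obtain ⟨j, _, rfl⟩ := List.mem_map.mp hQ
    exact hval j
  · by_cases hne : T.Nonempty
    · obtain ⟨t0, P, h1, h2, _⟩ := hne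
      exact le_csSup hbddT ⟨P, h1, h2, fun Q hQ => integral_nonneg hpos⟩
    · rw [Set.not_nonempty_iff_eq_empty.mp hne, Real.sSup_empty]
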